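/- Let τ₀ = |0⟩⟨0| and τ₊ = |+⟩⟨+| be the 2×2 rank-one projections onto the unit vectors (1,0) and (1/√2)(1,1) of ℂ². Let ω₀ and ω₊ be density matrices on ℂ²⊗ℂ² (4×4 matrices indexed by Fin 2 × Fin 2) such that (1/2)‖ω₀ − τ₀⊗τ₀‖₁ ≤ c, (1/2)‖ω₊ − τ₊⊗τ₊‖₁ ≤ c, and (1/2)‖ω₊ − ω₀‖₁ ≤ (1/2)‖τ₊ − τ₀‖₁. Then √(3/4) − √(1/2) ≤ 2c; in particular c ≥ (√3 − √2)/4. -/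

import Mathlib

open Matrix ComplexOrder

open scoped MatrixOrder Matrix.Norms.L2Operator in
noncomputable def traceNorm {n : Type*} [Fintype n] [DecidableEq n]
    (A : Matrix n n ℂ) : ℝ :=
  ((CFC.sqrt (Aᴴ * A)).trace).re

noncomputable def ketbra {d : ℕ} (ψ : Fin d → ℂ) : Matrix (Fin d) (Fin d) ℂ :=
  fun i j => ψ i * (starRingEnd ℂ) (ψ j)

noncomputable def kronPow {d : ℕ} (M : Matrix (Fin d) (Fin d) ℂ) (k : ℕ) :
    Matrix (Fin k → Fin d) (Fin k → Fin d) ℂ :=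
  fun i j => ∏ t : Fin k, M (i t) (j t)

noncomputable def fid {d : ℕ} (ψ : Fin d → ℂ) (σ : Matrix (Fin d) (Fin d) ℂ) : ℝ :=
  (∑ i, ∑ j, (starRingEnd ℂ) (ψ i) * σ i j * ψ j).re

/-! ### Auxiliary lemmas -/

open scoped MatrixOrder Matrix.Norms.L2Operator in
lemma bb84aux_traceNorm_eq_of_sq {n : Type*} [Fintype n] [DecidableEq n]
    (A B : Matrix n n ℂ) (hB : B.PosSemidef) (h : B ^ 2 = Aᴴ * A) :
    traceNorm A = B.trace.re := by
  unfold traceNorm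
  rw [CFC.sqrt_unique (b := B) (by rw [← pow_two]; exact h) hB.nonneg]

/-- The fundamental bound `Re tr(M X) ≤ ‖X‖₁` for a Hermitian contraction `M`
and a Hermitian matrix `X`. -/
lemma bb84aux_key_bound {n : Type*} [Fintype n] [DecidableEq n]
    (M X : Matrix n n ℂ) (hX : X.IsHermitian)
    (hM : (1 - Mᴴ * M).PosSemidef) :
    ((M * X).trace).re ≤ traceNorm X := by
  set U : Matrix n n ℂ := (hX.eigenvectorUnitary : Matrix n n ℂ) with hUdef
  have hUU : star U * U = 1 := Unitary.coe_star_mul_self hX.eigenvectorUnitary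
  have hUU' : U * star U = 1 := Unitary.coe_mul_star_self hX.eigenvectorUnitary
  have cancel : ∀ C : Matrix n n ℂ, star U * (U * C) = C := fun C => by
    rw [← mul_assoc, hUU, one_mul]
  set lam : n → ℝ := hX.eigenvalues with hlam
  have hspec : X = U * (diagonal (fun i => (lam i : ℂ)) * star U) := by
    rw [← mul_assoc]; exact hX.spectral_theorem
  set B : Matrix n n ℂ := U * (diagonal (fun i => ((|lam i| : ℝ) : ℂ)) * star U) with hBdef
  have hBpsd : B.PosSemidef := by
    have : B = (diagonal (fun i => ((Real.sqrt |lam i| : ℝ) : ℂ)) * star U)ᴴ *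
        (diagonal (fun i => ((Real.sqrt |lam i| : ℝ) : ℂ)) * star U) := by
      rw [conjTranspose_mul, star_eq_conjTranspose U, conjTranspose_conjTranspose,
        diagonal_conjTranspose, ← star_eq_conjTranspose U]
      simp only [mul_assoc, hBdef]
      congr 1
      have hstar : (star fun i => ((Real.sqrt |lam i| : ℝ) : ℂ)) =
          fun i => ((Real.sqrt |lam i| : ℝ) : ℂ) := by
        ext i; simp [Pi.star_apply, Complex.conj_ofReal]
      rw [hstar, ← mul_assoc, diagonal_mul_diagonal]
      have h2 : (fun i => ((Real.sqrt |lam i| : ℝ) : ℂ) * ((Real.sqrt |lam i| : ℝ) : ℂ))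
          = fun i => ((|lam i| : ℝ) : ℂ) := by
        funext i; rw [← Complex.ofReal_mul, Real.mul_self_sqrt (abs_nonneg _)]
      rw [h2]
    rw [this]
    exact posSemidef_conjTranspose_mul_self _
  have hBsq : B ^ 2 = Xᴴ * X := by
    rw [hX.eq, hspec, pow_two, hBdef]
    simp only [mul_assoc]
    rw [cancel, cancel, ← mul_assoc (diagonal _), ← mul_assoc (diagonal _),
      diagonal_mul_diagonal, diagonal_mul_diagonal]
    have h2 : (fun i => ((|lam i| : ℝ) : ℂ) * ((|lam i| : ℝ) : ℂ))
        = fun i => ((lam i : ℝ) : ℂ) * ((lam i : ℝ) : ℂ) := by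
      funext i; rw [← Complex.ofReal_mul, ← Complex.ofReal_mul, abs_mul_abs_self]
    rw [h2]
  have htn : traceNorm X = ∑ i, |lam i| := by
    rw [bb84aux_traceNorm_eq_of_sq X B hBpsd hBsq, hBdef, ← mul_assoc, trace_mul_cycle,
      hUU, one_mul, trace_diagonal]
    rw [← Complex.ofReal_sum]
    simp
  set N : Matrix n n ℂ := star U * (M * U) with hNdef
  have htr : (M * X).trace = (N * diagonal (fun i => ((lam i : ℝ) : ℂ))).trace := by
    rw [hspec, hNdef]
    simp only [← mul_assoc]
    rw [trace_mul_cycle]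
    simp only [← mul_assoc]
  have hNN : (1 - Nᴴ * N).PosSemidef := by
    have hUUc : Uᴴ * U = 1 := by rw [← star_eq_conjTranspose]; exact hUU
    have hUhU : U * Uᴴ = 1 := by rw [← star_eq_conjTranspose]; exact hUU'
    have cancel' : ∀ C : Matrix n n ℂ, U * (Uᴴ * C) = C := fun C => by
      rw [← mul_assoc, hUhU, one_mul]
    have hNsq : 1 - Nᴴ * N = Uᴴ * (1 - Mᴴ * M) * U := by
      rw [hNdef]
      simp only [conjTranspose_mul, conjTranspose_conjTranspose, star_eq_conjTranspose,
        mul_sub, sub_mul, mul_one, one_mul, mul_assoc]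
      rw [hUUc, cancel' (M * U)]
    rw [hNsq]
    exact hM.conjTranspose_mul_mul_same U
  have hdiagbd : ∀ i, ((N i i).re) * (N i i).re ≤ 1 := by
    intro i
    have hpsd := hNN.dotProduct_mulVec_nonneg (Pi.single i 1)
    have hentry : star (Pi.single i 1 : n → ℂ) ⬝ᵥ ((1 - Nᴴ * N) *ᵥ Pi.single i 1)
        = (1 - Nᴴ * N) i i := by
      simp [mulVec_single, dotProduct, Pi.single_apply, Finset.sum_ite_eq']
    rw [hentry] at hpsd
    have hre : ((Nᴴ * N) i i).re ≤ 1 := by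
      have := (Complex.le_def.mp hpsd).1
      simp only [Matrix.sub_apply, Matrix.one_apply_eq, Complex.sub_re, Complex.one_re,
        Complex.zero_re] at this
      linarith
    have hsum : ((Nᴴ * N) i i).re = ∑ k, Complex.normSq (N k i) := by
      rw [Matrix.mul_apply, Complex.re_sum]
      congr 1
      funext k
      rw [Matrix.conjTranspose_apply]
      have : (starRingEnd ℂ) (N k i) * N k i = (Complex.normSq (N k i) : ℂ) := by
        rw [mul_comm, Complex.mul_conj]
      simp [this]
    have hterm : Complex.normSq (N i i) ≤ ∑ k, Complex.normSq (N k i) :=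
      Finset.single_le_sum (f := fun k => Complex.normSq (N k i))
        (fun k _ => Complex.normSq_nonneg _) (Finset.mem_univ i)
    have h1 : Complex.normSq (N i i) ≤ 1 := by rw [hsum] at hre; linarith
    have := Complex.normSq_apply (N i i)
    nlinarith [sq_nonneg ((N i i).im)]
  calc ((M * X).trace).re = ∑ i, (N i i).re * lam i := by
        rw [htr, Matrix.trace, Complex.re_sum]
        congr 1
        funext i
        simp [Matrix.diag, Matrix.mul_diagonal, Complex.mul_re]
    _ ≤ ∑ i, |lam i| := by
        apply Finset.sum_le_sum
        intro i _
        have h1 : |(N i i).re| ≤ 1 := abs_le_one_iff_mul_self_le_one.mpr (hdiagbd i)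
        calc (N i i).re * lam i ≤ |(N i i).re * lam i| := le_abs_self _
          _ = |(N i i).re| * |lam i| := abs_mul _ _
          _ ≤ 1 * |lam i| := mul_le_mul_of_nonneg_right h1 (abs_nonneg _)
          _ = |lam i| := one_mul _
    _ = traceNorm X := htn.symm

/-! ### Explicit matrices for the BB84 computation -/

noncomputable def bb84aux_DeltaM : Matrix (Fin 2 × Fin 2) (Fin 2 × Fin 2) ℂ :=
  fun i j => if i = (0,0) ∧ j = (0,0) then (-3/4 : ℂ) else 1/4

noncomputable def bb84aux_PiM : Matrix (Fin 2 × Fin 2) (Fin 2 × Fin 2) ℂ :=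
  fun i j => if i = (0,0) then (if j = (0,0) then 1 else 0)
    else (if j = (0,0) then 0 else 1/3)

noncomputable def bb84aux_MM : Matrix (Fin 2 × Fin 2) (Fin 2 × Fin 2) ℂ :=
  ((2 / Real.sqrt 3 : ℝ) : ℂ) • bb84aux_DeltaM

lemma bb84aux_hs2 : (((Real.sqrt 2 : ℝ) : ℂ))⁻¹ * (((Real.sqrt 2 : ℝ) : ℂ))⁻¹ = 1/2 := by
  rw [← mul_inv, ← Complex.ofReal_mul, Real.mul_self_sqrt (by norm_num)]
  norm_num

lemma bb84aux_hcc : (((Real.sqrt 2 : ℝ) : ℂ)⁻¹) *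
    (starRingEnd ℂ) (((Real.sqrt 2 : ℝ) : ℂ)⁻¹) = 1/2 := by
  rw [← Complex.ofReal_inv, Complex.conj_ofReal, ← Complex.ofReal_mul,
    ← mul_inv, Real.mul_self_sqrt (by norm_num)]
  norm_num

open Kronecker in
lemma bb84aux_hkron_eq :
    (ketbra ![((Real.sqrt 2 : ℝ) : ℂ)⁻¹, ((Real.sqrt 2 : ℝ) : ℂ)⁻¹])
        ⊗ₖ (ketbra ![((Real.sqrt 2 : ℝ) : ℂ)⁻¹, ((Real.sqrt 2 : ℝ) : ℂ)⁻¹])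
      - (ketbra ![1, 0]) ⊗ₖ (ketbra ![1, 0]) = bb84aux_DeltaM := by
  ext ⟨i1, i2⟩ ⟨j1, j2⟩
  fin_cases i1 <;> fin_cases i2 <;> fin_cases j1 <;> fin_cases j2 <;>
    simp [ketbra, bb84aux_DeltaM, kroneckerMap_apply, bb84aux_hcc, Prod.ext_iff] <;>
    norm_num [bb84aux_hs2]

lemma bb84aux_hDh : bb84aux_DeltaMᴴ = bb84aux_DeltaM := by
  ext ⟨i1, i2⟩ ⟨j1, j2⟩
  fin_cases i1 <;> fin_cases i2 <;> fin_cases j1 <;> fin_cases j2 <;>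
    simp [bb84aux_DeltaM, conjTranspose_apply, Prod.ext_iff]

lemma bb84aux_hPih : bb84aux_PiMᴴ = bb84aux_PiM := by
  ext ⟨i1, i2⟩ ⟨j1, j2⟩
  fin_cases i1 <;> fin_cases i2 <;> fin_cases j1 <;> fin_cases j2 <;>
    simp [bb84aux_PiM, conjTranspose_apply, Prod.ext_iff]

lemma bb84aux_hDD : bb84aux_DeltaM * bb84aux_DeltaM = (3/4 : ℂ) • bb84aux_PiM := by
  ext ⟨i1, i2⟩ ⟨j1, j2⟩
  fin_cases i1 <;> fin_cases i2 <;> fin_cases j1 <;> fin_cases j2 <;>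
    simp [bb84aux_DeltaM, bb84aux_PiM, Matrix.mul_apply, Fintype.sum_prod_type,
      Fin.sum_univ_two, Prod.ext_iff] <;> norm_num

lemma bb84aux_hPP : bb84aux_PiM * bb84aux_PiM = bb84aux_PiM := by
  ext ⟨i1, i2⟩ ⟨j1, j2⟩
  fin_cases i1 <;> fin_cases i2 <;> fin_cases j1 <;> fin_cases j2 <;>
    simp [bb84aux_PiM, Matrix.mul_apply, Fintype.sum_prod_type, Fin.sum_univ_two,
      Prod.ext_iff] <;> norm_num

lemma bb84aux_hPitr : bb84aux_PiM.trace = 2 := by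
  simp [Matrix.trace, Matrix.diag, Fintype.sum_prod_type, Fin.sum_univ_two, bb84aux_PiM]
  norm_num

lemma bb84aux_hr2 : ((2 / Real.sqrt 3 : ℝ) : ℂ) * ((2 / Real.sqrt 3 : ℝ) : ℂ) = 4/3 := by
  rw [← Complex.ofReal_mul, div_mul_div_comm, Real.mul_self_sqrt (by norm_num)]
  norm_num

lemma bb84aux_hMherm : bb84aux_MMᴴ = bb84aux_MM := by
  rw [bb84aux_MM, conjTranspose_smul, bb84aux_hDh, Complex.star_def, Complex.conj_ofReal]

lemma bb84aux_hMMeq : bb84aux_MMᴴ * bb84aux_MM = bb84aux_PiM := by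
  rw [bb84aux_hMherm, bb84aux_MM, smul_mul_assoc, mul_smul_comm, smul_smul, bb84aux_hDD,
    smul_smul, bb84aux_hr2]
  norm_num

lemma bb84aux_hMcontr : (1 - bb84aux_MMᴴ * bb84aux_MM).PosSemidef := by
  rw [bb84aux_hMMeq]
  have h2 : 1 - bb84aux_PiM = (1 - bb84aux_PiM)ᴴ * (1 - bb84aux_PiM) := by
    rw [conjTranspose_sub, conjTranspose_one, bb84aux_hPih, sub_mul, mul_sub, mul_sub,
      one_mul, mul_one, bb84aux_hPP]
    noncomm_ring
  rw [h2]
  exact posSemidef_conjTranspose_mul_self _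

lemma bb84aux_htrM : ((bb84aux_MM * bb84aux_DeltaM).trace).re = Real.sqrt 3 := by
  rw [bb84aux_MM, smul_mul_assoc, bb84aux_hDD, smul_smul, trace_smul, bb84aux_hPitr]
  rw [smul_eq_mul, mul_assoc]
  rw [show ((3:ℂ)/4 * 2) = ((3/2 : ℝ) : ℂ) by norm_num]
  rw [← Complex.ofReal_mul, Complex.ofReal_re]
  have h3 : Real.sqrt 3 * Real.sqrt 3 = 3 := Real.mul_self_sqrt (by norm_num)
  have hpos : (0:ℝ) < Real.sqrt 3 := by positivity
  field_simp
  nlinarith [h3]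

lemma bb84aux_ketbra_herm {d : ℕ} (ψ : Fin d → ℂ) : (ketbra ψ).IsHermitian := by
  ext i j
  simp [ketbra, conjTranspose_apply, mul_comm]

open Kronecker in
lemma bb84aux_kron_herm {A B : Matrix (Fin 2) (Fin 2) ℂ} (hA : A.IsHermitian)
    (hB : B.IsHermitian) : (A ⊗ₖ B).IsHermitian := by
  ext ⟨i1, i2⟩ ⟨j1, j2⟩
  simp only [conjTranspose_apply, kroneckerMap_apply, star_mul']
  rw [← conjTranspose_apply, ← conjTranspose_apply, hA.eq, hB.eq]

lemma bb84aux_hA2sq :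
    (ketbra ![((Real.sqrt 2 : ℝ) : ℂ)⁻¹, ((Real.sqrt 2 : ℝ) : ℂ)⁻¹] - ketbra ![1, 0])ᴴ *
      (ketbra ![((Real.sqrt 2 : ℝ) : ℂ)⁻¹, ((Real.sqrt 2 : ℝ) : ℂ)⁻¹] - ketbra ![1, 0])
    = ((2 : ℂ))⁻¹ • 1 := by
  ext i j
  fin_cases i <;> fin_cases j <;>
    simp [ketbra, Matrix.mul_apply, Fin.sum_univ_two, conjTranspose_apply, bb84aux_hcc,
      Matrix.one_apply] <;>
    norm_num [bb84aux_hs2]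

lemma bb84aux_hB2psd : (((((Real.sqrt 2 : ℝ))⁻¹ : ℝ) : ℂ) •
    (1 : Matrix (Fin 2) (Fin 2) ℂ)).PosSemidef := by
  have h : ((((Real.sqrt 2 : ℝ))⁻¹ : ℝ) : ℂ) • (1 : Matrix (Fin 2) (Fin 2) ℂ)
      = (((Real.sqrt ((Real.sqrt 2)⁻¹) : ℝ) : ℂ) • (1 : Matrix (Fin 2) (Fin 2) ℂ))ᴴ *
        (((Real.sqrt ((Real.sqrt 2)⁻¹) : ℝ) : ℂ) • (1 : Matrix (Fin 2) (Fin 2) ℂ)) := by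
    rw [conjTranspose_smul, conjTranspose_one, smul_mul_assoc, mul_smul_comm, one_mul,
      smul_smul, Complex.star_def, Complex.conj_ofReal, ← Complex.ofReal_mul,
      Real.mul_self_sqrt (by positivity)]
  rw [h]
  exact posSemidef_conjTranspose_mul_self _

lemma bb84aux_htn2 : traceNorm
    (ketbra ![((Real.sqrt 2 : ℝ) : ℂ)⁻¹, ((Real.sqrt 2 : ℝ) : ℂ)⁻¹] - ketbra ![1, 0])
    = Real.sqrt 2 := by
  rw [bb84aux_traceNorm_eq_of_sq _ _ bb84aux_hB2psd]
  · rw [trace_smul, trace_one]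
    simp only [Fintype.card_fin, nsmul_eq_mul, smul_eq_mul]
    rw [Complex.mul_re]
    simp only [Complex.ofReal_re, Complex.ofReal_im]
    norm_num
    rw [inv_mul_eq_div, div_eq_iff (by positivity), Real.mul_self_sqrt (by norm_num)]
  · rw [bb84aux_hA2sq, smul_pow, one_pow]
    congr 1
    rw [← Complex.ofReal_pow]
    norm_num [inv_pow, Real.sq_sqrt]

open Kronecker in
/-- The introduction's computation: the errors of a cloner of BB84 states
cannot be too small. -/
theorem bb84_cloning_error_lower_bound (c : ℝ)
    (ω₀ ωp : Matrix (Fin 2 × Fin 2) (Fin 2 × Fin 2) ℂ)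
    (hω₀ : ω₀.PosSemidef) (hω₀tr : ω₀.trace = 1)
    (hωp : ωp.PosSemidef) (hωptr : ωp.trace = 1)
    (h0 : (1 / 2 : ℝ) * traceNorm
        (ω₀ - (ketbra ![1, 0]) ⊗ₖ (ketbra ![1, 0])) ≤ c)
    (hplus : (1 / 2 : ℝ) * traceNorm
        (ωp - (ketbra ![((Real.sqrt 2 : ℝ) : ℂ)⁻¹, ((Real.sqrt 2 : ℝ) : ℂ)⁻¹])
            ⊗ₖ (ketbra ![((Real.sqrt 2 : ℝ) : ℂ)⁻¹, ((Real.sqrt 2 : ℝ) : ℂ)⁻¹])) ≤ c)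
    (hcontr : (1 / 2 : ℝ) * traceNorm (ωp - ω₀)
        ≤ (1 / 2 : ℝ) * traceNorm
            (ketbra ![((Real.sqrt 2 : ℝ) : ℂ)⁻¹, ((Real.sqrt 2 : ℝ) : ℂ)⁻¹]
              - ketbra ![1, 0])) :
    Real.sqrt (3 / 4) - Real.sqrt (1 / 2) ≤ 2 * c ∧
      (Real.sqrt 3 - Real.sqrt 2) / 4 ≤ c := by
  set τpp := (ketbra ![((Real.sqrt 2 : ℝ) : ℂ)⁻¹, ((Real.sqrt 2 : ℝ) : ℂ)⁻¹])
      ⊗ₖ (ketbra ![((Real.sqrt 2 : ℝ) : ℂ)⁻¹, ((Real.sqrt 2 : ℝ) : ℂ)⁻¹]) with hτpp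
  set τ00 := (ketbra ![(1 : ℂ), 0]) ⊗ₖ (ketbra ![(1 : ℂ), 0]) with hτ00
  have hX1 : (ωp - τpp).IsHermitian :=
    hωp.1.sub (bb84aux_kron_herm (bb84aux_ketbra_herm _) (bb84aux_ketbra_herm _))
  have hX2 : (ωp - ω₀).IsHermitian := hωp.1.sub hω₀.1
  have hX3 : (ω₀ - τ00).IsHermitian :=
    hω₀.1.sub (bb84aux_kron_herm (bb84aux_ketbra_herm _) (bb84aux_ketbra_herm _))
  have hMneg : (1 - (-bb84aux_MM)ᴴ * (-bb84aux_MM)).PosSemidef := by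
    simpa using bb84aux_hMcontr
  have b1 := bb84aux_key_bound (-bb84aux_MM) (ωp - τpp) hX1 hMneg
  have b2 := bb84aux_key_bound bb84aux_MM (ωp - ω₀) hX2 bb84aux_hMcontr
  have b3 := bb84aux_key_bound bb84aux_MM (ω₀ - τ00) hX3 bb84aux_hMcontr
  have hsplit : (-bb84aux_MM) * (ωp - τpp) + bb84aux_MM * (ωp - ω₀)
      + bb84aux_MM * (ω₀ - τ00) = bb84aux_MM * bb84aux_DeltaM := by
    rw [← bb84aux_hkron_eq, ← hτpp, ← hτ00]
    noncomm_ring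
  have hre : Real.sqrt 3 = (((-bb84aux_MM) * (ωp - τpp)).trace).re
      + ((bb84aux_MM * (ωp - ω₀)).trace).re + ((bb84aux_MM * (ω₀ - τ00)).trace).re := by
    rw [← Complex.add_re, ← Complex.add_re, ← trace_add, ← trace_add, hsplit,
      bb84aux_htrM]
  have hub : Real.sqrt 3 ≤ traceNorm (ωp - τpp) + traceNorm (ωp - ω₀)
      + traceNorm (ω₀ - τ00) := by
    rw [hre]
    exact add_le_add (add_le_add b1 b2) b3
  have hc1 : traceNorm (ωp - τpp) ≤ 2 * c := by linarith
  have hc3 : traceNorm (ω₀ - τ00) ≤ 2 * c := by linarith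
  have hc2 : traceNorm (ωp - ω₀) ≤ Real.sqrt 2 := by
    rw [bb84aux_htn2] at hcontr
    linarith
  have hmain : Real.sqrt 3 - Real.sqrt 2 ≤ 4 * c := by linarith
  have h34 : Real.sqrt (3 / 4) = Real.sqrt 3 / 2 := by
    rw [show (3/4 : ℝ) = (Real.sqrt 3 / 2) ^ 2 by
      rw [div_pow, Real.sq_sqrt (by norm_num : (3:ℝ) ≥ 0)]; norm_num]
    exact Real.sqrt_sq (by positivity)
  have h12 : Real.sqrt (1 / 2) = Real.sqrt 2 / 2 := by
    rw [show (1/2 : ℝ) = (Real.sqrt 2 / 2) ^ 2 by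
      rw [div_pow, Real.sq_sqrt (by norm_num : (2:ℝ) ≥ 0)]; norm_num]
    exact Real.sqrt_sq (by positivity)
  constructor
  · rw [h34, h12]; linarith
  · linarith
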